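/- Let N be an odd positive integer and let λ_0, …, λ_N be pairwise distinct positive real numbers. Then the functions b_0, …, b_N, where b_j(x) := j!·Φ_N^{(N−j)}(x), form a basis of the real vector space U_N spanned by x ↦ exp(λ_j x), j = 0, …, N. -/

import Mathlib

open Finset

private lemma expHasDeriv (a x : ℝ) :
    HasDerivAt (fun y => Real.exp (a * y)) (a * Real.exp (a * x)) x := by
  simpa [mul_comm, Function.comp_def] using (Real.hasDerivAt_exp (a * x)).comp x ((hasDerivAt_id x).const_mul a)

private lemma iteratedDeriv_sum_exp {m : ℕ} (c l : Fin m → ℝ) (n : ℕ) :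
    iteratedDeriv n (fun x => ∑ i, c i * Real.exp (l i * x))
      = fun x => ∑ i, c i * l i ^ n * Real.exp (l i * x) := by
  induction n with
  | zero => simp
  | succ n ih =>
    rw [iteratedDeriv_succ, ih]
    funext x
    have h : HasDerivAt (fun x => ∑ i, c i * l i ^ n * Real.exp (l i * x))
        (∑ i : Fin m, c i * l i ^ n * (l i * Real.exp (l i * x))) x :=
      HasDerivAt.fun_sum fun i _ => (expHasDeriv (l i) x).const_mul (c i * l i ^ n)
    rw [h.deriv]
    exact Finset.sum_congr rfl fun i _ => by ring

private lemma iteratedDeriv_zero_fun (n : ℕ) : iteratedDeriv n (0 : ℝ → ℝ) = 0 := by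
  induction n with
  | zero => simp
  | succ n ih =>
    rw [iteratedDeriv_succ, ih]
    funext x
    exact deriv_const x 0

private lemma vand_zero {n : ℕ} (l : Fin n → ℝ) (hl : Function.Injective l)
    (a : Fin n → ℝ) (h : ∀ k : Fin n, ∑ i, a i * l i ^ (k : ℕ) = 0) : a = 0 := by
  have hdet : ((Matrix.vandermonde l).transpose).det ≠ 0 := by
    rw [Matrix.det_transpose, Matrix.det_vandermonde_ne_zero_iff]
    exact hl
  apply Matrix.eq_zero_of_mulVec_eq_zero hdet
  funext k
  have := h k
  simpa [Matrix.mulVec, Matrix.vandermonde, dotProduct, mul_comm] using this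

private lemma vand_zero' {n : ℕ} (l : Fin n → ℝ) (hl : Function.Injective l)
    (a : Fin n → ℝ) (h : ∀ k : Fin n, ∑ i : Fin n, a i * l k ^ (i : ℕ) = 0) : a = 0 := by
  have hdet : (Matrix.vandermonde l).det ≠ 0 :=
    Matrix.det_vandermonde_ne_zero_iff.mpr hl
  apply Matrix.eq_zero_of_mulVec_eq_zero hdet
  funext k
  have := h k
  simpa [Matrix.mulVec, Matrix.vandermonde, dotProduct, mul_comm] using this

/-- For `N` odd and pairwise distinct positive `λ_0, …, λ_N`, the functions
`b_j(x) = j! · Φ_N^{(N-j)}(x)`, `j = 0, …, N`, form a basis of the real vector space `U_N`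
spanned by the exponentials `x ↦ exp(λ_j x)`. -/
theorem b_family_is_basis
    (N : ℕ) (hN : 0 < N) (hNodd : Odd N)
    (l : Fin (N + 1) → ℝ) (hl : Function.Injective l) (hlpos : ∀ j, 0 < l j)
    (Φ : ℝ → ℝ)
    (hΦmem : Φ ∈ Submodule.span ℝ
        (Set.range (fun j : Fin (N + 1) => fun x : ℝ => Real.exp (l j * x))))
    (hΦ0 : ∀ j < N, iteratedDeriv j Φ 0 = 0)
    (hΦN : iteratedDeriv N Φ 0 = 1)
    (b : Fin (N + 1) → ℝ → ℝ)
    (hb : ∀ j : Fin (N + 1),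
        b j = fun x => (Nat.factorial j : ℝ) * iteratedDeriv (N - (j : ℕ)) Φ x) :
    LinearIndependent ℝ b ∧
    Submodule.span ℝ (Set.range b) =
      Submodule.span ℝ
        (Set.range (fun j : Fin (N + 1) => fun x : ℝ => Real.exp (l j * x))) := by
  set e : Fin (N + 1) → ℝ → ℝ := fun j => fun x : ℝ => Real.exp (l j * x) with he
  -- Write Φ as a linear combination of the exponentials
  obtain ⟨c, hc⟩ := (Submodule.mem_span_range_iff_exists_fun ℝ).mp hΦmem
  have hΦeq : Φ = fun x => ∑ i, c i * Real.exp (l i * x) := by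
    funext x
    rw [← hc]
    simp [he]
  -- Iterated derivatives of Φ
  have hD : ∀ n : ℕ, iteratedDeriv n Φ = fun x => ∑ i, c i * l i ^ n * Real.exp (l i * x) := by
    intro n
    rw [hΦeq, iteratedDeriv_sum_exp]
  have hD0 : ∀ n : ℕ, iteratedDeriv n Φ 0 = ∑ i, c i * l i ^ n := by
    intro n
    rw [hD n]
    simp
  -- the moment conditions
  have hP0 : ∀ n < N, ∑ i, c i * l i ^ n = 0 := fun n hn => by rw [← hD0]; exact hΦ0 n hn
  have hPN : ∑ i, c i * l i ^ N = 1 := by rw [← hD0]; exact hΦN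
  -- linear independence of the exponentials
  have he_li : LinearIndependent ℝ e := by
    rw [Fintype.linearIndependent_iff]
    intro g hg
    have hg' : (fun x => ∑ i, g i * Real.exp (l i * x)) = (0 : ℝ → ℝ) := by
      funext x
      have := congrFun hg x
      simpa [he] using this
    have hzero : ∀ k : Fin (N + 1), ∑ i, g i * l i ^ (k : ℕ) = 0 := by
      intro k
      have h1 : iteratedDeriv (k : ℕ) (fun x => ∑ i, g i * Real.exp (l i * x)) 0 = 0 := by
        rw [hg', iteratedDeriv_zero_fun]
        rfl
      rw [iteratedDeriv_sum_exp] at h1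
      simpa using h1
    have := vand_zero l hl g hzero
    exact fun i => congrFun this i
  -- all coefficients c i are nonzero
  have hcne : ∀ i, c i ≠ 0 := by
    intro i0
    set q : Polynomial ℝ := ∏ m ∈ univ.erase i0, (Polynomial.X - Polynomial.C (l m)) with hq
    have hqmonic : q.Monic :=
      Polynomial.monic_prod_of_monic _ _ fun m _ => Polynomial.monic_X_sub_C (l m)
    have hqdeg : q.natDegree = N := by
      rw [hq, Polynomial.natDegree_prod _ _ (fun m _ => Polynomial.X_sub_C_ne_zero (l m))]
      simp [Polynomial.natDegree_X_sub_C, Finset.card_erase_of_mem]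
    have hkey : ∑ i, c i * q.eval (l i) = 1 := by
      have h1 : ∀ i : Fin (N + 1), c i * q.eval (l i)
          = ∑ k ∈ Finset.range (N + 1), q.coeff k * (c i * l i ^ k) := by
        intro i
        rw [Polynomial.eval_eq_sum_range, hqdeg, Finset.mul_sum]
        exact Finset.sum_congr rfl fun k _ => by ring
      rw [Finset.sum_congr rfl fun i _ => h1 i, Finset.sum_comm]
      have h2 : ∀ k ∈ Finset.range (N + 1),
          ∑ i, q.coeff k * (c i * l i ^ k) = if k = N then q.coeff N else 0 := by
        intro k hk
        rw [← Finset.mul_sum]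
        rcases Nat.lt_or_ge k N with h | h
        · rw [hP0 k h, if_neg h.ne]
          ring
        · have hkN : k = N := le_antisymm (Nat.lt_succ_iff.mp (Finset.mem_range.mp hk)) h
          rw [hkN, hPN, if_pos rfl, mul_one]
      rw [Finset.sum_congr rfl h2,
        Finset.sum_ite_eq' (Finset.range (N + 1)) N (fun _ => q.coeff N),
        if_pos (Finset.self_mem_range_succ N)]
      have h3 : q.coeff N = 1 := by
        have := hqmonic.leadingCoeff
        rwa [Polynomial.leadingCoeff, hqdeg] at this
      rw [h3]
    have hsingle : ∑ i, c i * q.eval (l i) = c i0 * q.eval (l i0) := by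
      apply Finset.sum_eq_single i0
      · intro i _ hne
        have : q.eval (l i) = 0 := by
          rw [hq, Polynomial.eval_prod]
          apply Finset.prod_eq_zero (Finset.mem_erase.mpr ⟨hne, Finset.mem_univ i⟩)
          simp
        rw [this, mul_zero]
      · intro h; exact absurd (Finset.mem_univ i0) h
    intro hci0
    rw [hsingle, hci0, zero_mul] at hkey
    exact zero_ne_one hkey
  -- expression for b j
  have hbD : ∀ j : Fin (N + 1),
      b j = fun x => ∑ i, ((j : ℕ).factorial * (c i * l i ^ (N - (j : ℕ)))) * Real.exp (l i * x) := by
    intro j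
    rw [hb j, hD (N - (j : ℕ))]
    funext x
    rw [Finset.mul_sum]
    exact Finset.sum_congr rfl fun i _ => by ring
  -- linear independence of b
  have hb_li : LinearIndependent ℝ b := by
    rw [Fintype.linearIndependent_iff]
    intro d hd
    have hcomb : ∑ i : Fin (N + 1),
        (∑ j : Fin (N + 1), d j * ((j : ℕ).factorial * (c i * l i ^ (N - (j : ℕ))))) • e i = 0 := by
      rw [← hd]
      funext x
      simp only [Finset.sum_apply, Pi.smul_apply, smul_eq_mul]
      symm
      calc ∑ j : Fin (N + 1), d j * b j x
          = ∑ j : Fin (N + 1), ∑ i : Fin (N + 1),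
              d j * (((j : ℕ).factorial * (c i * l i ^ (N - (j : ℕ)))) * Real.exp (l i * x)) := by
            refine Finset.sum_congr rfl fun j _ => ?_
            rw [hbD j]
            simp only [Finset.mul_sum]
        _ = ∑ i : Fin (N + 1), ∑ j : Fin (N + 1),
              d j * (((j : ℕ).factorial * (c i * l i ^ (N - (j : ℕ)))) * Real.exp (l i * x)) :=
            Finset.sum_comm
        _ = ∑ i : Fin (N + 1),
              (∑ j : Fin (N + 1), d j * ((j : ℕ).factorial * (c i * l i ^ (N - (j : ℕ))))) * e i x := by
            refine Finset.sum_congr rfl fun i _ => ?_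
            rw [Finset.sum_mul]
            refine Finset.sum_congr rfl fun j _ => ?_
            simp only [he]
            ring
    have hAi : ∀ i : Fin (N + 1),
        (∑ j : Fin (N + 1), d j * ((j : ℕ).factorial * (c i * l i ^ (N - (j : ℕ))))) = 0 :=
      Fintype.linearIndependent_iff.mp he_li _ hcomb
    have hSi : ∀ i : Fin (N + 1),
        ∑ j : Fin (N + 1), (d j * (j : ℕ).factorial) * l i ^ (N - (j : ℕ)) = 0 := by
      intro i
      have hfac : (∑ j : Fin (N + 1), (d j * (j : ℕ).factorial) * l i ^ (N - (j : ℕ))) * c i = 0 := by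
        rw [Finset.sum_mul, ← hAi i]
        exact Finset.sum_congr rfl fun j _ => by ring
      exact (mul_eq_zero.mp hfac).resolve_right (hcne i)
    set d' : Fin (N + 1) → ℝ := fun k => d k.rev * ((k.rev : ℕ)).factorial with hd'
    have hrev : ∀ j : Fin (N + 1), ((j.rev : ℕ)) = N - (j : ℕ) := by
      intro j
      rw [Fin.val_rev]
      omega
    have hvz : ∀ k : Fin (N + 1), ∑ m : Fin (N + 1), d' m * l k ^ (m : ℕ) = 0 := by
      intro k
      rw [← hSi k]
      apply Finset.sum_bijective Fin.rev Fin.rev_bijective (fun _ => by simp)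
      intro m _
      have hm : (m : ℕ) ≤ N := Nat.lt_succ_iff.mp m.isLt
      have h1 : N - ((m.rev : ℕ)) = (m : ℕ) := by rw [hrev m]; omega
      simp only [hd', h1]
    have hd'0 := vand_zero' l hl d' hvz
    intro j
    have hthis : d' j.rev = 0 := congrFun hd'0 j.rev
    simp only [hd', Fin.rev_rev] at hthis
    have hfne : ((j : ℕ).factorial : ℝ) ≠ 0 := Nat.cast_ne_zero.mpr (Nat.factorial_ne_zero _)
    exact (mul_eq_zero.mp hthis).resolve_right hfne
  refine ⟨hb_li, ?_⟩
  have hble : Submodule.span ℝ (Set.range b) ≤ Submodule.span ℝ (Set.range e) := by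
    rw [Submodule.span_le]
    rintro _ ⟨j, rfl⟩
    have hbj : b j = ∑ i : Fin (N + 1), ((j : ℕ).factorial * (c i * l i ^ (N - (j : ℕ)))) • e i := by
      rw [hbD j]
      funext x
      simp [he]
    rw [hbj]
    exact Submodule.sum_mem _ fun i _ =>
      Submodule.smul_mem _ _ (Submodule.subset_span ⟨i, rfl⟩)
  have : FiniteDimensional ℝ ↥(Submodule.span ℝ (Set.range e)) :=
    FiniteDimensional.span_of_finite ℝ (Set.finite_range e)
  apply Submodule.eq_of_le_of_finrank_eq hble
  rw [finrank_span_eq_card hb_li, finrank_span_eq_card he_li]
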